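/- arXiv:1712.08423 — 2 statements merged into one kernel-verified Lean document; each statement's English description precedes it below -/
import Mathlib

section
/- For any quantum channel Λ on ℂ^d given by Kraus operators {K_i}, the supremum over all unit vectors |ψ⟩ ∈ ℂ^d ⊗ ℂ^d and all d×d unitaries W of ⟨(W ⊗ I)Φ⁺| ρ_{ψ,Λ} |(W ⊗ I)Φ⁺⟩ equals λ_max(ρ_{Φ⁺,Λ̂}), the largest eigenvalue of ρ_{Φ⁺,Λ̂}, and this supremum is attained. -/
open Matrix Kronecker BigOperators Finset

noncomputable section

/-- The maximally entangled state `|Φ⁺⟩ = (1/√d) Σᵢ |i⟩⊗|i⟩`. -/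
def phiPlus (d : ℕ) : Fin d × Fin d → ℂ :=
  fun p => if p.1 = p.2 then ((Real.sqrt d)⁻¹ : ℝ) else 0

/-- The output state `ρ_{ψ,Λ} = Σᵢ (I ⊗ Kᵢ)|ψ⟩⟨ψ|(I ⊗ Kᵢ†)`. -/
def outChannel (d : ℕ) {ι : Type*} [Fintype ι] (K : ι → Matrix (Fin d) (Fin d) ℂ)
    (ψ : Fin d × Fin d → ℂ) : Matrix (Fin d × Fin d) (Fin d × Fin d) ℂ :=
  ∑ m, ((1 : Matrix (Fin d) (Fin d) ℂ) ⊗ₖ K m) * Matrix.vecMulVec ψ (star ψ) *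
    ((1 : Matrix (Fin d) (Fin d) ℂ) ⊗ₖ (K m)ᴴ)

end

section Aux

variable {n : Type*} [Fintype n] [DecidableEq n]

lemma star_mulVec_dotProduct (M : Matrix n n ℂ) (u x : n → ℂ) :
    star (M *ᵥ u) ⬝ᵥ x = star u ⬝ᵥ (Mᴴ *ᵥ x) := by
  rw [Matrix.star_mulVec, ← Matrix.dotProduct_mulVec]

lemma dotProduct_mulVec_star (M : Matrix n n ℂ) (u x : n → ℂ) :
    star u ⬝ᵥ (M *ᵥ x) = star (Mᴴ *ᵥ u) ⬝ᵥ x := by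
  rw [star_mulVec_dotProduct, Matrix.conjTranspose_conjTranspose]

lemma vecMulVec_mulVec' (a b x : n → ℂ) :
    Matrix.vecMulVec a b *ᵥ x = (b ⬝ᵥ x) • a := by
  ext i
  simp only [Matrix.mulVec, dotProduct, Matrix.vecMulVec_apply, Pi.smul_apply,
    smul_eq_mul, Finset.sum_mul]
  exact Finset.sum_congr rfl fun j _ => by ring

lemma matSum_mulVec {ι : Type*} [Fintype ι] (M : ι → Matrix n n ℂ) (v : n → ℂ) :
    (∑ m, M m) *ᵥ v = ∑ m, M m *ᵥ v := by
  ext i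
  simp only [Matrix.mulVec, dotProduct, Finset.sum_apply, Matrix.sum_apply,
    Finset.sum_mul]
  rw [Finset.sum_comm]

lemma dotProduct_vecSum {ι : Type*} [Fintype ι] (v : n → ℂ) (w : ι → n → ℂ) :
    v ⬝ᵥ (∑ m, w m) = ∑ m, v ⬝ᵥ w m := by
  simp only [dotProduct, Finset.sum_apply, Finset.mul_sum]
  rw [Finset.sum_comm]

lemma kron_conjT {d : ℕ} (A B : Matrix (Fin d) (Fin d) ℂ) :
    (A ⊗ₖ B)ᴴ = Aᴴ ⊗ₖ Bᴴ := by
  ext ⟨i, j⟩ ⟨k, l⟩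
  simp [Matrix.conjTranspose_apply, Matrix.kroneckerMap_apply, star_mul']

end Aux

section Main

variable {d : ℕ} {ι : Type*} [Fintype ι]

lemma outChannel_quadForm (K : ι → Matrix (Fin d) (Fin d) ℂ) (ψ v : Fin d × Fin d → ℂ) :
    star v ⬝ᵥ (outChannel d K ψ) *ᵥ v
      = ∑ m, (star v ⬝ᵥ ((1 : Matrix (Fin d) (Fin d) ℂ) ⊗ₖ K m) *ᵥ ψ)
            * (star ψ ⬝ᵥ ((1 : Matrix (Fin d) (Fin d) ℂ) ⊗ₖ (K m)ᴴ) *ᵥ v) := by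
  unfold outChannel
  rw [matSum_mulVec, dotProduct_vecSum]
  refine Finset.sum_congr rfl fun m _ => ?_
  rw [← Matrix.mulVec_mulVec, ← Matrix.mulVec_mulVec, vecMulVec_mulVec',
    Matrix.mulVec_smul, dotProduct_smul]
  simp only [smul_eq_mul]
  ring

lemma kron_comm_one (A B : Matrix (Fin d) (Fin d) ℂ) :
    (A ⊗ₖ (1 : Matrix (Fin d) (Fin d) ℂ)) * ((1 : Matrix (Fin d) (Fin d) ℂ) ⊗ₖ B)
      = ((1 : Matrix (Fin d) (Fin d) ℂ) ⊗ₖ B) * (A ⊗ₖ (1 : Matrix (Fin d) (Fin d) ℂ)) := by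
  rw [← Matrix.mul_kronecker_mul, ← Matrix.mul_kronecker_mul, one_mul, mul_one, one_mul, mul_one]

lemma swap_key (K : ι → Matrix (Fin d) (Fin d) ℂ) (W : Matrix (Fin d) (Fin d) ℂ)
    (ψ : Fin d × Fin d → ℂ) :
    star ((W ⊗ₖ (1 : Matrix (Fin d) (Fin d) ℂ)) *ᵥ phiPlus d) ⬝ᵥ
        (outChannel d K ψ) *ᵥ ((W ⊗ₖ (1 : Matrix (Fin d) (Fin d) ℂ)) *ᵥ phiPlus d)
      = star ((Wᴴ ⊗ₖ (1 : Matrix (Fin d) (Fin d) ℂ)) *ᵥ ψ) ⬝ᵥ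
        (outChannel d (fun i => (K i)ᴴ) (phiPlus d)) *ᵥ
          ((Wᴴ ⊗ₖ (1 : Matrix (Fin d) (Fin d) ℂ)) *ᵥ ψ) := by
  rw [outChannel_quadForm, outChannel_quadForm]
  simp only [Matrix.conjTranspose_conjTranspose]
  refine Finset.sum_congr rfl fun m _ => ?_
  have h1 : star ((W ⊗ₖ (1 : Matrix (Fin d) (Fin d) ℂ)) *ᵥ phiPlus d) ⬝ᵥ
      ((1 : Matrix (Fin d) (Fin d) ℂ) ⊗ₖ K m) *ᵥ ψ
      = star (phiPlus d) ⬝ᵥ ((1 : Matrix (Fin d) (Fin d) ℂ) ⊗ₖ K m) *ᵥ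
          ((Wᴴ ⊗ₖ (1 : Matrix (Fin d) (Fin d) ℂ)) *ᵥ ψ) := by
    rw [star_mulVec_dotProduct, kron_conjT, Matrix.conjTranspose_one,
      Matrix.mulVec_mulVec, kron_comm_one, ← Matrix.mulVec_mulVec]
  have h2 : star ψ ⬝ᵥ ((1 : Matrix (Fin d) (Fin d) ℂ) ⊗ₖ (K m)ᴴ) *ᵥ
      ((W ⊗ₖ (1 : Matrix (Fin d) (Fin d) ℂ)) *ᵥ phiPlus d)
      = star ((Wᴴ ⊗ₖ (1 : Matrix (Fin d) (Fin d) ℂ)) *ᵥ ψ) ⬝ᵥ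
          ((1 : Matrix (Fin d) (Fin d) ℂ) ⊗ₖ (K m)ᴴ) *ᵥ phiPlus d := by
    rw [Matrix.mulVec_mulVec, ← kron_comm_one, ← Matrix.mulVec_mulVec,
      dotProduct_mulVec_star, kron_conjT, Matrix.conjTranspose_one]
  rw [h1, h2, mul_comm]

lemma norm_pres {W : Matrix (Fin d) (Fin d) ℂ} (hW : W ∈ Matrix.unitaryGroup (Fin d) ℂ)
    (ψ : Fin d × Fin d → ℂ) :
    star ((Wᴴ ⊗ₖ (1 : Matrix (Fin d) (Fin d) ℂ)) *ᵥ ψ) ⬝ᵥ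
        ((Wᴴ ⊗ₖ (1 : Matrix (Fin d) (Fin d) ℂ)) *ᵥ ψ) = star ψ ⬝ᵥ ψ := by
  rw [star_mulVec_dotProduct, Matrix.mulVec_mulVec, kron_conjT,
    Matrix.conjTranspose_conjTranspose, Matrix.conjTranspose_one,
    ← Matrix.mul_kronecker_mul, mul_one]
  have hWW : W * Wᴴ = 1 := by
    simpa [Matrix.star_eq_conjTranspose] using Matrix.mem_unitaryGroup_iff.mp hW
  rw [hWW, Matrix.one_kronecker_one, Matrix.one_mulVec]

lemma rayleigh_le {N : Type*} [Fintype N] [DecidableEq N] [Nonempty N]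
    {A : Matrix N N ℂ} (hA : A.IsHermitian) (φ : N → ℂ) (hφ : star φ ⬝ᵥ φ = 1) :
    (star φ ⬝ᵥ A *ᵥ φ).re ≤ ⨆ p, hA.eigenvalues p := by
  set U : Matrix N N ℂ := (hA.eigenvectorUnitary : Matrix N N ℂ) with hUdef
  set c : N → ℂ := star U *ᵥ φ with hcdef
  have hUc : Uᴴ = star U := rfl
  have key : star φ ⬝ᵥ A *ᵥ φ
      = ∑ p, ((hA.eigenvalues p : ℂ) * ((starRingEnd ℂ) (c p) * c p)) := by
    conv_lhs => rw [hA.spectral_theorem, Unitary.conjStarAlgAut_apply]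
    rw [← Matrix.mulVec_mulVec, ← Matrix.mulVec_mulVec, dotProduct_mulVec_star, hUc, ← hcdef]
    simp only [dotProduct, Matrix.mulVec_diagonal, Function.comp_apply, Pi.star_apply]
    exact Finset.sum_congr rfl fun p _ => by simp only [Complex.star_def]; rw [mul_left_comm]; rfl
  have hcnorm : ∑ p, Complex.normSq (c p) = 1 := by
    have h1 : star c ⬝ᵥ c = 1 := by
      have hsU : (star U)ᴴ = U := by
        rw [Matrix.star_eq_conjTranspose, Matrix.conjTranspose_conjTranspose]
      rw [hcdef, star_mulVec_dotProduct, hsU, Matrix.mulVec_mulVec]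
      have : U * star U = 1 := Matrix.mem_unitaryGroup_iff.mp hA.eigenvectorUnitary.2
      rw [this, Matrix.one_mulVec, hφ]
    have h2 : star c ⬝ᵥ c = ((∑ p, Complex.normSq (c p) : ℝ) : ℂ) := by
      simp only [dotProduct, Pi.star_apply, Complex.ofReal_sum]
      exact Finset.sum_congr rfl fun p _ => by
        simp [Complex.star_def, Complex.normSq_eq_conj_mul_self]
    have := h1.symm.trans h2
    exact_mod_cast this.symm
  have key' : (star φ ⬝ᵥ A *ᵥ φ).re = ∑ p, hA.eigenvalues p * Complex.normSq (c p) := by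
    rw [key]
    rw [Complex.re_sum]
    refine Finset.sum_congr rfl fun p _ => ?_
    rw [← Complex.normSq_eq_conj_mul_self, ← Complex.ofReal_mul]
    exact Complex.ofReal_re _
  rw [key']
  have hbdd : BddAbove (Set.range hA.eigenvalues) := Set.Finite.bddAbove (Set.finite_range _)
  calc ∑ p, hA.eigenvalues p * Complex.normSq (c p)
      ≤ ∑ p, (⨆ q, hA.eigenvalues q) * Complex.normSq (c p) := by
        refine Finset.sum_le_sum fun p _ => ?_
        exact mul_le_mul_of_nonneg_right (le_ciSup hbdd p) (Complex.normSq_nonneg _)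
    _ = ⨆ q, hA.eigenvalues q := by rw [← Finset.mul_sum, hcnorm, mul_one]

lemma eigvec_unit {N : Type*} [Fintype N] [DecidableEq N]
    {A : Matrix N N ℂ} (hA : A.IsHermitian) (p : N) :
    star ⇑(hA.eigenvectorBasis p) ⬝ᵥ ⇑(hA.eigenvectorBasis p) = 1 := by
  have h1 : (inner (𝕜 := ℂ) (hA.eigenvectorBasis p) (hA.eigenvectorBasis p)) = 1 := by
    rw [inner_self_eq_norm_sq_to_K, hA.eigenvectorBasis.orthonormal.1 p]
    norm_num
  rw [EuclideanSpace.inner_eq_star_dotProduct, dotProduct_comm] at h1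
  exact h1

lemma eigvec_value {N : Type*} [Fintype N] [DecidableEq N]
    {A : Matrix N N ℂ} (hA : A.IsHermitian) (p : N) :
    star ⇑(hA.eigenvectorBasis p) ⬝ᵥ A *ᵥ ⇑(hA.eigenvectorBasis p)
      = (hA.eigenvalues p : ℂ) := by
  rw [Matrix.IsHermitian.mulVec_eigenvectorBasis, dotProduct_smul, eigvec_unit hA p]
  simp

end Main

/-- the supremum over all unit vectors `ψ` and unitaries `W` of
`⟨(W ⊗ I)Φ⁺| ρ_{ψ,Λ} |(W ⊗ I)Φ⁺⟩` equals `λ_max(ρ_{Φ⁺,Λ̂})`, and it is attained. -/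
theorem max_fidelity_eq_lambda_max_dual (d : ℕ) (hd : 2 ≤ d) {ι : Type*} [Fintype ι]
    (K : ι → Matrix (Fin d) (Fin d) ℂ) (hK : ∑ i, (K i)ᴴ * K i = 1)
    (hDual : (outChannel d (fun i => (K i)ᴴ) (phiPlus d)).IsHermitian) :
    IsGreatest
      {r : ℝ | ∃ ψ : Fin d × Fin d → ℂ, ∃ W : Matrix (Fin d) (Fin d) ℂ,
        star ψ ⬝ᵥ ψ = 1 ∧ W ∈ Matrix.unitaryGroup (Fin d) ℂ ∧
        r = (star ((W ⊗ₖ (1 : Matrix (Fin d) (Fin d) ℂ)).mulVec (phiPlus d)) ⬝ᵥ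
              (outChannel d K ψ).mulVec
                ((W ⊗ₖ (1 : Matrix (Fin d) (Fin d) ℂ)).mulVec (phiPlus d))).re}
      (⨆ p : Fin d × Fin d, hDual.eigenvalues p) := by
  have hne : Nonempty (Fin d × Fin d) := ⟨(⟨0, by omega⟩, ⟨0, by omega⟩)⟩
  obtain ⟨p₀, hp₀⟩ := Finite.exists_max hDual.eigenvalues
  have hbdd : BddAbove (Set.range hDual.eigenvalues) := Set.Finite.bddAbove (Set.finite_range _)
  have hsup : (⨆ p, hDual.eigenvalues p) = hDual.eigenvalues p₀ :=
    le_antisymm (ciSup_le hp₀) (le_ciSup hbdd p₀)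
  constructor
  · -- membership: take ψ = top eigenvector, W = 1
    refine ⟨⇑(hDual.eigenvectorBasis p₀), 1, eigvec_unit hDual p₀, one_mem _, ?_⟩
    rw [swap_key K 1 ⇑(hDual.eigenvectorBasis p₀)]
    rw [Matrix.conjTranspose_one, Matrix.one_kronecker_one, Matrix.one_mulVec]
    rw [eigvec_value hDual p₀, hsup, Complex.ofReal_re]
  · -- upper bound
    rintro r ⟨ψ, W, hψ, hW, rfl⟩
    rw [swap_key K W ψ]
    exact rayleigh_le hDual _ ((norm_pres hW ψ).trans hψ)
end

section
/- The state ρ_{Φ⁺,Ω̂} produced by the dual map Ω̂ equals |φ_0⟩⟨φ_0| + (1/d) Σ_{m=1}^{d-1} (1 - x_m²)|0m⟩⟨0m|, where |φ_0⟩ = (1/√d)(|00⟩ + Σ_{i=1}^{d-1} x_i |ii⟩); its largest eigenvalue is (1 + Σ_{i=1}^{d-1} x_i²)/d, and the unit vector |ψ'⟩ = (|00⟩ + Σ_{i=1}^{d-1} x_i |ii⟩)/√(1 + Σ_{i=1}^{d-1} x_i²) is an eigenvector of ρ_{Φ⁺,Ω̂} for this largest eigenvalue. -/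
open Matrix Kronecker BigOperators Finset

noncomputable section

/-- Standard basis vector `|i⟩⊗|j⟩` of `ℂ^d ⊗ ℂ^d`. -/
def stdVec (d : ℕ) (i j : Fin d) : Fin d × Fin d → ℂ := fun p => if p = (i, j) then 1 else 0

/-- Kraus operators of the channel Ω. -/
def krausA (d : ℕ) [NeZero d] (x : Fin d → ℝ) : Fin d → Matrix (Fin d) (Fin d) ℂ :=
  fun m => if m = 0 then Matrix.diagonal (fun i => (x i : ℂ))
    else Matrix.of (fun i j => if i = 0 ∧ j = m then ((Real.sqrt (1 - (x m) ^ 2) : ℝ) : ℂ) else 0)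

end

section AuxProof

variable {d : ℕ} [NeZero d] {x : Fin d → ℝ}


variable {d : ℕ} [NeZero d] {x : Fin d → ℝ}

lemma v0_apply (hx0 : x 0 = 1) (p : Fin d × Fin d) :
    (stdVec d 0 0 + ∑ i ∈ Finset.univ.erase (0 : Fin d), (x i : ℂ) • stdVec d i i) p
      = if p.1 = p.2 then (x p.1 : ℂ) else 0 := by
  obtain ⟨a, b⟩ := p
  simp only [Pi.add_apply, Finset.sum_apply, Pi.smul_apply, stdVec, smul_eq_mul, mul_ite,
    mul_one, mul_zero, Prod.mk.injEq]
  by_cases hab : a = b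
  · subst hab
    by_cases ha : a = 0
    · subst ha
      simp [hx0, Finset.sum_ite_eq', Prod.ext_iff]
    · rw [if_pos rfl, if_neg (by simp [Prod.ext_iff, ha]) , zero_add]
      rw [Finset.sum_eq_single a (fun b hb hba => by simp [Prod.ext_iff, Ne.symm hba, hba]) (by simp [ha])]
      simp
  · rw [if_neg hab, if_neg (by simp [Prod.ext_iff]; rintro rfl; exact fun h => hab h.symm),
      zero_add, Finset.sum_eq_zero]
    intro i hi
    simp only [Prod.mk.injEq, ite_eq_right_iff, and_imp]
    rintro rfl rfl; exact absurd rfl hab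

lemma w0_eq (hx0 : x 0 = 1) :
    ((1 : Matrix (Fin d) (Fin d) ℂ) ⊗ₖ (krausA d x 0)ᴴ) *ᵥ phiPlus d
      = fun p => (((Real.sqrt d)⁻¹ : ℝ) : ℂ) * (if p.1 = p.2 then (x p.1 : ℂ) else 0) := by
  funext ⟨a, b⟩
  simp only [Matrix.mulVec, dotProduct, Fintype.sum_prod_type, kroneckerMap_apply,
    krausA, if_pos rfl, diagonal_conjTranspose, Matrix.one_apply, phiPlus,
    diagonal_apply, Pi.star_apply, RCLike.star_def, Complex.conj_ofReal]
  rw [Finset.sum_eq_single a (fun c _ hca => by simp [Ne.symm hca]) (by simp)]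
  rw [Finset.sum_eq_single a (fun e _ hea => by simp [Ne.symm hea]) (by simp)]
  by_cases hab : a = b <;>
    simp [hab, diagonal_conjTranspose, diagonal_apply, mul_comm, Ne.symm]

lemma wm_eq (m : Fin d) (hm : m ≠ 0) :
    ((1 : Matrix (Fin d) (Fin d) ℂ) ⊗ₖ (krausA d x m)ᴴ) *ᵥ phiPlus d
      = fun p => if p = ((0 : Fin d), m)
          then ((Real.sqrt (1 - (x m) ^ 2) : ℝ) : ℂ) * (((Real.sqrt d)⁻¹ : ℝ) : ℂ) else 0 := by
  funext ⟨a, b⟩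
  simp only [Matrix.mulVec, dotProduct, Fintype.sum_prod_type, kroneckerMap_apply,
    krausA, if_neg hm, Matrix.one_apply, phiPlus, conjTranspose_apply, Matrix.of_apply,
    Prod.mk.injEq]
  rw [Finset.sum_eq_single a (fun c _ hca => by simp [Ne.symm hca]) (by simp)]
  rw [Finset.sum_eq_single a (fun e _ hea => by simp [Ne.symm hea]) (by simp)]
  by_cases h : a = 0 ∧ b = m <;> simp [h, Complex.conj_ofReal]

lemma sandwich {n : Type*} [Fintype n] (M : Matrix n n ℂ) (ψ : n → ℂ) :
    M * Matrix.vecMulVec ψ (star ψ) * Mᴴ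
      = Matrix.vecMulVec (M *ᵥ ψ) (star (M *ᵥ ψ)) := by
  ext a b
  simp only [Matrix.mul_apply, vecMulVec_apply, conjTranspose_apply, Matrix.mulVec, dotProduct,
    Pi.star_apply, Finset.sum_mul, Finset.mul_sum, star_sum, star_mul']
  exact Finset.sum_congr rfl fun e _ => Finset.sum_congr rfl fun c _ => by ring

lemma vmv_mulVec {n : Type*} [Fintype n] (u v w : n → ℂ) :
    Matrix.vecMulVec u v *ᵥ w = (v ⬝ᵥ w) • u := by
  funext a
  simp [Matrix.mulVec, dotProduct, vecMulVec_apply, Finset.mul_sum, mul_comm, mul_left_comm]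

lemma vmv_smul {n : Type*} [Fintype n] (z : ℂ) (u : n → ℂ) :
    Matrix.vecMulVec (z • u) (star (z • u)) = (z * star z) • Matrix.vecMulVec u (star u) := by
  ext a b
  simp only [vecMulVec_apply, Pi.smul_apply, Pi.star_apply, smul_eq_mul, star_mul',
    Matrix.smul_apply]
  ring

lemma one_kron_ct (M : Matrix (Fin d) (Fin d) ℂ) :
    (1 : Matrix (Fin d) (Fin d) ℂ) ⊗ₖ Mᴴ = ((1 : Matrix (Fin d) (Fin d) ℂ) ⊗ₖ M)ᴴ := by
  ext ⟨a, b⟩ ⟨c, e⟩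
  by_cases h : a = c <;> simp [Matrix.one_apply, conjTranspose_apply, h, eq_comm]

lemma part1 (hd : 0 < d) (hx0 : x 0 = 1) (hx : ∀ i : Fin d, i ≠ 0 → 0 < x i ∧ x i < 1) :
    outChannel d (fun m => (krausA d x m)ᴴ) (phiPlus d)
      = Matrix.vecMulVec
          (((Real.sqrt d : ℝ) : ℂ)⁻¹ •
            (stdVec d 0 0 + ∑ i ∈ Finset.univ.erase (0 : Fin d), (x i : ℂ) • stdVec d i i))
          (star (((Real.sqrt d : ℝ) : ℂ)⁻¹ •
            (stdVec d 0 0 + ∑ i ∈ Finset.univ.erase (0 : Fin d), (x i : ℂ) • stdVec d i i)))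
        + ∑ m ∈ Finset.univ.erase (0 : Fin d),
            (((1 - (x m) ^ 2) / d : ℝ) : ℂ) •
              Matrix.vecMulVec (stdVec d 0 m) (star (stdVec d 0 m)) := by
  have key : outChannel d (fun m => (krausA d x m)ᴴ) (phiPlus d)
      = ∑ m, Matrix.vecMulVec
          (((1 : Matrix (Fin d) (Fin d) ℂ) ⊗ₖ (krausA d x m)ᴴ) *ᵥ phiPlus d)
          (star (((1 : Matrix (Fin d) (Fin d) ℂ) ⊗ₖ (krausA d x m)ᴴ) *ᵥ phiPlus d)) := by
    unfold outChannel
    refine Finset.sum_congr rfl fun m _ => ?_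
    show (1 : Matrix (Fin d) (Fin d) ℂ) ⊗ₖ (krausA d x m)ᴴ * _ *
        ((1 : Matrix (Fin d) (Fin d) ℂ) ⊗ₖ ((krausA d x m)ᴴ)ᴴ) = _
    rw [one_kron_ct ((krausA d x m)ᴴ), sandwich]
  rw [key, ← Finset.add_sum_erase _ _ (Finset.mem_univ (0 : Fin d))]
  congr 1
  · have h1 : ((1 : Matrix (Fin d) (Fin d) ℂ) ⊗ₖ (krausA d x 0)ᴴ) *ᵥ phiPlus d
        = ((Real.sqrt d : ℝ) : ℂ)⁻¹ •
            (stdVec d 0 0 + ∑ i ∈ Finset.univ.erase (0 : Fin d), (x i : ℂ) • stdVec d i i) := by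
      rw [w0_eq hx0]
      funext p
      rw [Pi.smul_apply, v0_apply hx0, smul_eq_mul, Complex.ofReal_inv]
    rw [h1]
  · refine Finset.sum_congr rfl fun m hm => ?_
    have hm0 : m ≠ 0 := Finset.ne_of_mem_erase hm
    have h2 : ((1 : Matrix (Fin d) (Fin d) ℂ) ⊗ₖ (krausA d x m)ᴴ) *ᵥ phiPlus d
        = (((Real.sqrt (1 - (x m) ^ 2) * (Real.sqrt d)⁻¹ : ℝ)) : ℂ) • stdVec d 0 m := by
      rw [wm_eq m hm0]
      funext p
      simp [stdVec, mul_ite, Complex.ofReal_mul, Complex.ofReal_inv]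
    rw [h2, vmv_smul]
    congr 1
    rw [RCLike.star_def, Complex.conj_ofReal, ← Complex.ofReal_mul]
    congr 1
    have hx2 : (0:ℝ) ≤ 1 - x m ^ 2 := by
      have := (hx m hm0).1; have := (hx m hm0).2; nlinarith [(hx m hm0).1, (hx m hm0).2]
    have hds : (0:ℝ) ≤ (d:ℝ) := Nat.cast_nonneg d
    rw [div_eq_mul_inv]
    rw [show Real.sqrt (1 - x m ^ 2) * (Real.sqrt d)⁻¹ * (Real.sqrt (1 - x m ^ 2) * (Real.sqrt d)⁻¹)
        = (Real.sqrt (1 - x m ^ 2) * Real.sqrt (1 - x m ^ 2)) * ((Real.sqrt d) * (Real.sqrt d))⁻¹ by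
      rw [mul_inv]; ring]
    rw [Real.mul_self_sqrt hx2, Real.mul_self_sqrt hds]

lemma dot_v0 (hx0 : x 0 = 1) :
    star (stdVec d 0 0 + ∑ i ∈ Finset.univ.erase (0 : Fin d), (x i : ℂ) • stdVec d i i) ⬝ᵥ
      (stdVec d 0 0 + ∑ i ∈ Finset.univ.erase (0 : Fin d), (x i : ℂ) • stdVec d i i)
      = ((1 + ∑ i ∈ Finset.univ.erase (0 : Fin d), (x i) ^ 2 : ℝ) : ℂ) := by
  rw [show ((1 + ∑ i ∈ Finset.univ.erase (0 : Fin d), (x i) ^ 2 : ℝ) : ℂ)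
      = ((∑ i : Fin d, (x i) ^ 2 : ℝ) : ℂ) by
    rw [← Finset.add_sum_erase _ _ (Finset.mem_univ (0 : Fin d)), hx0]; norm_num]
  simp only [dotProduct, Pi.star_apply, v0_apply hx0]
  rw [Fintype.sum_prod_type]
  push_cast
  refine Finset.sum_congr rfl fun a _ => ?_
  rw [Finset.sum_eq_single a (fun b _ hba => by simp [Ne.symm hba]) (by simp)]
  simp [Complex.conj_ofReal, sq]

lemma dot_0m (hx0 : x 0 = 1) {m : Fin d} (hm : m ≠ 0) :
    star (stdVec d 0 m) ⬝ᵥ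
      (stdVec d 0 0 + ∑ i ∈ Finset.univ.erase (0 : Fin d), (x i : ℂ) • stdVec d i i) = 0 := by
  simp only [dotProduct, Pi.star_apply, v0_apply hx0]
  refine Finset.sum_eq_zero fun p _ => ?_
  by_cases hp : p = ((0 : Fin d), m)
  · subst hp; simp [Ne.symm hm]
  · simp [stdVec, hp]

lemma sum_mulVec' {n : Type*} [Fintype n] {ι : Type*} (s : Finset ι)
    (M : ι → Matrix n n ℂ) (v : n → ℂ) :
    (∑ m ∈ s, M m) *ᵥ v = ∑ m ∈ s, M m *ᵥ v := by
  funext a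
  simp only [Matrix.mulVec, dotProduct, Finset.sum_apply, Matrix.sum_apply, Finset.sum_mul]
  exact Finset.sum_comm

lemma part3 (hd : 0 < d) (hx0 : x 0 = 1) (hx : ∀ i : Fin d, i ≠ 0 → 0 < x i ∧ x i < 1) :
    (outChannel d (fun m => (krausA d x m)ᴴ) (phiPlus d)).mulVec
          (((Real.sqrt (1 + ∑ i ∈ Finset.univ.erase (0 : Fin d), (x i) ^ 2) : ℝ) : ℂ)⁻¹ •
            (stdVec d 0 0 + ∑ i ∈ Finset.univ.erase (0 : Fin d), (x i : ℂ) • stdVec d i i))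
        = (((1 + ∑ i ∈ Finset.univ.erase (0 : Fin d), (x i) ^ 2) / d : ℝ) : ℂ) •
            (((Real.sqrt (1 + ∑ i ∈ Finset.univ.erase (0 : Fin d), (x i) ^ 2) : ℝ) : ℂ)⁻¹ •
              (stdVec d 0 0 + ∑ i ∈ Finset.univ.erase (0 : Fin d), (x i : ℂ) • stdVec d i i)) := by
  set S : ℝ := 1 + ∑ i ∈ Finset.univ.erase (0 : Fin d), (x i) ^ 2 with hS
  set v₀ : Fin d × Fin d → ℂ :=
    stdVec d 0 0 + ∑ i ∈ Finset.univ.erase (0 : Fin d), (x i : ℂ) • stdVec d i i with hv0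
  rw [part1 hd hx0 hx, Matrix.add_mulVec, Matrix.mulVec_smul, Matrix.mulVec_smul]
  have hz : (∑ m ∈ Finset.univ.erase (0 : Fin d),
      (((1 - (x m) ^ 2) / d : ℝ) : ℂ) •
        Matrix.vecMulVec (stdVec d 0 m) (star (stdVec d 0 m))) *ᵥ v₀ = 0 := by
    rw [sum_mulVec']
    refine Finset.sum_eq_zero fun m hm => ?_
    rw [Matrix.smul_mulVec, vmv_mulVec, dot_0m hx0 (Finset.ne_of_mem_erase hm)]
    simp
  rw [hz, smul_zero, add_zero, vmv_mulVec]
  rw [show star (((Real.sqrt d : ℝ) : ℂ)⁻¹ • v₀) ⬝ᵥ v₀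
      = ((Real.sqrt d : ℝ) : ℂ)⁻¹ * (S : ℂ) by
    rw [star_smul, smul_dotProduct, dot_v0 hx0, ← hS]
    congr 1
    simp [Complex.conj_ofReal]]
  rw [smul_smul, smul_smul, smul_smul, ← hv0]
  congr 1
  have hsq : ((Real.sqrt d : ℝ) : ℂ)⁻¹ * ((Real.sqrt d : ℝ) : ℂ)⁻¹ = ((d : ℝ) : ℂ)⁻¹ := by
    rw [← mul_inv, ← Complex.ofReal_mul, Real.mul_self_sqrt (by positivity)]
  calc ((Real.sqrt S : ℝ) : ℂ)⁻¹ * (((Real.sqrt d : ℝ) : ℂ)⁻¹ * (S : ℂ))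
        * ((Real.sqrt d : ℝ) : ℂ)⁻¹
      = (((Real.sqrt d : ℝ) : ℂ)⁻¹ * ((Real.sqrt d : ℝ) : ℂ)⁻¹) * (S : ℂ)
        * ((Real.sqrt S : ℝ) : ℂ)⁻¹ := by ring
    _ = ((d : ℝ) : ℂ)⁻¹ * (S : ℂ) * ((Real.sqrt S : ℝ) : ℂ)⁻¹ := by rw [hsq]
    _ = (((S / d : ℝ)) : ℂ) * ((Real.sqrt S : ℝ) : ℂ)⁻¹ := by
        rw [Complex.ofReal_div, div_eq_mul_inv]; ring

lemma dot_star_comm {n : Type*} [Fintype n] (u w : n → ℂ) :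
    star u ⬝ᵥ w = (starRingEnd ℂ) (star w ⬝ᵥ u) := by
  simp only [dotProduct, Pi.star_apply, RCLike.star_def, map_sum]
  refine Finset.sum_congr rfl fun i _ => ?_
  rw [map_mul (starRingEnd ℂ), Complex.conj_conj, mul_comm]

lemma dot_sum' {n : Type*} [Fintype n] {ι : Type*} (s : Finset ι) (u : n → ℂ)
    (w : ι → n → ℂ) :
    u ⬝ᵥ (∑ m ∈ s, w m) = ∑ m ∈ s, u ⬝ᵥ w m := by
  simp only [dotProduct, Finset.sum_apply, Finset.mul_sum]
  exact Finset.sum_comm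

lemma dot_v0_gen (hx0 : x 0 = 1) (v : Fin d × Fin d → ℂ) :
    star (stdVec d 0 0 + ∑ i ∈ Finset.univ.erase (0 : Fin d), (x i : ℂ) • stdVec d i i) ⬝ᵥ v
      = ∑ a : Fin d, (x a : ℂ) * v (a, a) := by
  simp only [dotProduct, Pi.star_apply, v0_apply hx0]
  rw [Fintype.sum_prod_type]
  refine Finset.sum_congr rfl fun a _ => ?_
  rw [Finset.sum_eq_single a (fun b _ hba => by simp [Ne.symm hba]) (by simp)]
  simp [Complex.conj_ofReal]

lemma dot_std (i j : Fin d) (v : Fin d × Fin d → ℂ) :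
    star (stdVec d i j) ⬝ᵥ v = v (i, j) := by
  unfold dotProduct
  rw [Finset.sum_eq_single ((i, j) : Fin d × Fin d) (fun p _ hp => by simp [stdVec, hp])
    (by simp)]
  simp [stdVec]

lemma quad_form (hd : 0 < d) (hx0 : x 0 = 1) (hx : ∀ i : Fin d, i ≠ 0 → 0 < x i ∧ x i < 1)
    (v : Fin d × Fin d → ℂ) :
    star v ⬝ᵥ (outChannel d (fun m => (krausA d x m)ᴴ) (phiPlus d) *ᵥ v)
      = ((Complex.normSq (∑ a : Fin d, (x a : ℂ) * v (a, a)) / d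
          + ∑ m ∈ Finset.univ.erase (0 : Fin d),
              (1 - (x m) ^ 2) / d * Complex.normSq (v (0, m)) : ℝ) : ℂ) := by
  set v₀ : Fin d × Fin d → ℂ :=
    stdVec d 0 0 + ∑ i ∈ Finset.univ.erase (0 : Fin d), (x i : ℂ) • stdVec d i i with hv0
  rw [part1 hd hx0 hx, Matrix.add_mulVec, dotProduct_add, vmv_mulVec, sum_mulVec']
  have hfirst : star v ⬝ᵥ ((star (((Real.sqrt d : ℝ) : ℂ)⁻¹ • v₀) ⬝ᵥ v) •
        (((Real.sqrt d : ℝ) : ℂ)⁻¹ • v₀))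
      = ((Complex.normSq (∑ a : Fin d, (x a : ℂ) * v (a, a)) / d : ℝ) : ℂ) := by
    rw [dotProduct_smul, smul_eq_mul, dot_star_comm v (((Real.sqrt d : ℝ) : ℂ)⁻¹ • v₀),
      Complex.mul_conj]
    rw [star_smul, smul_dotProduct, dot_v0_gen hx0]
    rw [show star (((Real.sqrt d : ℝ) : ℂ)⁻¹) = (((Real.sqrt d)⁻¹ : ℝ) : ℂ) by
      simp [Complex.conj_ofReal]]
    rw [smul_eq_mul, Complex.normSq_mul, Complex.normSq_ofReal]
    congr 1
    rw [div_eq_mul_inv, mul_comm]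
    congr 1
    rw [← mul_inv, Real.mul_self_sqrt (by positivity)]
  rw [hfirst]
  have hsum : star v ⬝ᵥ (∑ m ∈ Finset.univ.erase (0 : Fin d),
        ((((1 - (x m) ^ 2) / d : ℝ) : ℂ) •
          Matrix.vecMulVec (stdVec d 0 m) (star (stdVec d 0 m))) *ᵥ v)
      = ((∑ m ∈ Finset.univ.erase (0 : Fin d),
          (1 - (x m) ^ 2) / d * Complex.normSq (v (0, m)) : ℝ) : ℂ) := by
    rw [dot_sum', Complex.ofReal_sum]
    refine Finset.sum_congr rfl fun m hm => ?_
    rw [Matrix.smul_mulVec, vmv_mulVec, dot_std, dotProduct_smul, smul_eq_mul,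
      dotProduct_smul, smul_eq_mul, dot_star_comm v (stdVec d 0 m), dot_std,
      Complex.mul_conj, Complex.ofReal_mul]
  rw [hsum, ← Complex.ofReal_add]

lemma sum_sq_eq (hx0 : x 0 = 1) :
    ∑ a : Fin d, (x a) ^ 2 = 1 + ∑ i ∈ Finset.univ.erase (0 : Fin d), (x i) ^ 2 := by
  rw [← Finset.add_sum_erase _ _ (Finset.mem_univ (0 : Fin d)), hx0, one_pow]

lemma diag_row_sum_le (f : Fin d × Fin d → ℝ) (hf : ∀ q, 0 ≤ f q) :
    (∑ a : Fin d, f (a, a)) + ∑ m ∈ Finset.univ.erase (0 : Fin d), f (0, m)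
      ≤ ∑ q : Fin d × Fin d, f q := by
  classical
  have h1 : (∑ a : Fin d, f (a, a))
      = ∑ q ∈ Finset.univ.image (fun a : Fin d => (a, a)), f q := by
    rw [Finset.sum_image (fun a _ b _ h => by simpa [Prod.ext_iff] using h)]
  have h2 : (∑ m ∈ Finset.univ.erase (0 : Fin d), f (0, m))
      = ∑ q ∈ (Finset.univ.erase (0 : Fin d)).image (fun m : Fin d => ((0 : Fin d), m)), f q := by
    rw [Finset.sum_image (fun a _ b _ h => by simpa [Prod.ext_iff] using h)]
  rw [h1, h2, ← Finset.sum_union]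
  · exact Finset.sum_le_sum_of_subset_of_nonneg (Finset.subset_univ _) fun q _ _ => hf q
  · rw [Finset.disjoint_left]
    rintro ⟨a, b⟩ h1 h2
    obtain ⟨c, -, hc⟩ := Finset.mem_image.1 h1
    obtain ⟨m, hm, hm2⟩ := Finset.mem_image.1 h2
    obtain ⟨rfl, rfl⟩ : c = a ∧ c = b := by simpa [Prod.ext_iff] using hc
    have hm0 : m ≠ 0 := (Finset.mem_erase.1 hm).1
    obtain ⟨h0, hmb⟩ : (0 : Fin d) = c ∧ m = c := by simpa [Prod.ext_iff] using hm2
    exact hm0 (by rw [hmb, ← h0])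

lemma eig_le (hd : 0 < d) (hx0 : x 0 = 1) (hx : ∀ i : Fin d, i ≠ 0 → 0 < x i ∧ x i < 1)
    (hH : (outChannel d (fun m => (krausA d x m)ᴴ) (phiPlus d)).IsHermitian)
    (p : Fin d × Fin d) :
    hH.eigenvalues p ≤ (1 + ∑ i ∈ Finset.univ.erase (0 : Fin d), (x i) ^ 2) / d := by
  set S : ℝ := 1 + ∑ i ∈ Finset.univ.erase (0 : Fin d), (x i) ^ 2 with hS
  have hS1 : 1 ≤ S := by
    rw [hS]
    have : (0:ℝ) ≤ ∑ i ∈ Finset.univ.erase (0 : Fin d), (x i) ^ 2 :=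
      Finset.sum_nonneg fun i _ => sq_nonneg _
    linarith
  set v : Fin d × Fin d → ℂ := ⇑(hH.eigenvectorBasis p) with hv
  have hval := hH.eigenvalues_eq p
  rw [quad_form hd hx0 hx v] at hval
  rw [show (RCLike.re (((Complex.normSq (∑ a : Fin d, (x a : ℂ) * v (a, a)) / d
          + ∑ m ∈ Finset.univ.erase (0 : Fin d),
              (1 - (x m) ^ 2) / d * Complex.normSq (v (0, m)) : ℝ) : ℂ)))
      = (Complex.normSq (∑ a : Fin d, (x a : ℂ) * v (a, a)) / d
          + ∑ m ∈ Finset.univ.erase (0 : Fin d),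
              (1 - (x m) ^ 2) / d * Complex.normSq (v (0, m))) from Complex.ofReal_re _] at hval
  -- norm of eigenvector is one
  have hnorm : ∑ q : Fin d × Fin d, Complex.normSq (v q) = 1 := by
    have h1 : ‖hH.eigenvectorBasis p‖ = 1 := hH.eigenvectorBasis.orthonormal.1 p
    rw [EuclideanSpace.norm_eq] at h1
    have h2 : ∑ q : Fin d × Fin d, ‖v q‖ ^ 2 = 1 := Real.sqrt_eq_one.1 h1
    rw [← h2]
    exact Finset.sum_congr rfl fun q _ => by
      rw [Complex.sq_norm]
  have hxnn : ∀ a : Fin d, 0 ≤ x a := by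
    intro a
    by_cases ha : a = 0
    · rw [ha, hx0]; norm_num
    · exact le_of_lt (hx a ha).1
  set T : ℂ := ∑ a : Fin d, (x a : ℂ) * v (a, a) with hTdef
  have hT : Complex.normSq T ≤ S * ∑ a : Fin d, Complex.normSq (v (a, a)) := by
    have habs : ‖T‖ ≤ ∑ a : Fin d, x a * ‖v (a, a)‖ := by
      rw [hTdef]
      refine le_trans (norm_sum_le Finset.univ fun a => (x a : ℂ) * v (a, a)) ?_
      refine le_of_eq (Finset.sum_congr rfl fun a _ => ?_)
      rw [norm_mul, Complex.norm_real, Real.norm_eq_abs, abs_of_nonneg (hxnn a)]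
    calc Complex.normSq T = ‖T‖ ^ 2 := (Complex.sq_norm T).symm
      _ ≤ (∑ a : Fin d, x a * ‖v (a, a)‖) ^ 2 := by
          exact pow_le_pow_left₀ (norm_nonneg T) habs 2
      _ ≤ (∑ a : Fin d, (x a) ^ 2) * ∑ a : Fin d, ‖v (a, a)‖ ^ 2 :=
          Finset.sum_mul_sq_le_sq_mul_sq Finset.univ _ _
      _ = S * ∑ a : Fin d, Complex.normSq (v (a, a)) := by
          rw [sum_sq_eq hx0, ← hS]
          congr 1
          exact Finset.sum_congr rfl fun a _ => Complex.sq_norm _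
  have hd' : (0:ℝ) < d := by exact_mod_cast hd
  have h1 : Complex.normSq T / d ≤ S / d * ∑ a : Fin d, Complex.normSq (v (a, a)) := by
    rw [show S / d * ∑ a : Fin d, Complex.normSq (v (a, a))
        = (S * ∑ a : Fin d, Complex.normSq (v (a, a))) / d by ring]
    exact (div_le_div_iff_of_pos_right hd').2 hT
  have h2 : ∑ m ∈ Finset.univ.erase (0 : Fin d), (1 - (x m) ^ 2) / d * Complex.normSq (v (0, m))
      ≤ S / d * ∑ m ∈ Finset.univ.erase (0 : Fin d), Complex.normSq (v (0, m)) := by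
    rw [Finset.mul_sum]
    refine Finset.sum_le_sum fun m hm => ?_
    refine mul_le_mul_of_nonneg_right ?_ (Complex.normSq_nonneg _)
    refine (div_le_div_iff_of_pos_right hd').2 ?_
    nlinarith [sq_nonneg (x m)]
  have h3 : (∑ a : Fin d, Complex.normSq (v (a, a)))
      + ∑ m ∈ Finset.univ.erase (0 : Fin d), Complex.normSq (v (0, m)) ≤ 1 := by
    rw [← hnorm]
    exact diag_row_sum_le (fun q => Complex.normSq (v q)) fun q => Complex.normSq_nonneg _
  have hSd : (0:ℝ) ≤ S / d := by positivity
  calc hH.eigenvalues p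
      = Complex.normSq T / d + ∑ m ∈ Finset.univ.erase (0 : Fin d),
          (1 - (x m) ^ 2) / d * Complex.normSq (v (0, m)) := hval
    _ ≤ S / d * ∑ a : Fin d, Complex.normSq (v (a, a))
        + S / d * ∑ m ∈ Finset.univ.erase (0 : Fin d), Complex.normSq (v (0, m)) :=
          add_le_add h1 h2
    _ = S / d * ((∑ a : Fin d, Complex.normSq (v (a, a)))
        + ∑ m ∈ Finset.univ.erase (0 : Fin d), Complex.normSq (v (0, m))) := by ring
    _ ≤ S / d * 1 := mul_le_mul_of_nonneg_left h3 hSd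
    _ = S / d := mul_one _

lemma eig_exists (hd : 0 < d) (hx0 : x 0 = 1) (hx : ∀ i : Fin d, i ≠ 0 → 0 < x i ∧ x i < 1)
    (hH : (outChannel d (fun m => (krausA d x m)ᴴ) (phiPlus d)).IsHermitian) :
    ∃ p : Fin d × Fin d, hH.eigenvalues p
      = (1 + ∑ i ∈ Finset.univ.erase (0 : Fin d), (x i) ^ 2) / d := by
  classical
  set A := outChannel d (fun m => (krausA d x m)ᴴ) (phiPlus d) with hA
  set S : ℝ := 1 + ∑ i ∈ Finset.univ.erase (0 : Fin d), (x i) ^ 2 with hS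
  have hS1 : 1 ≤ S := by
    have : (0:ℝ) ≤ ∑ i ∈ Finset.univ.erase (0 : Fin d), (x i) ^ 2 :=
      Finset.sum_nonneg fun i _ => sq_nonneg _
    rw [hS]; linarith
  have hSpos : (0:ℝ) < S := lt_of_lt_of_le one_pos hS1
  set v₀ : Fin d × Fin d → ℂ :=
    stdVec d 0 0 + ∑ i ∈ Finset.univ.erase (0 : Fin d), (x i : ℂ) • stdVec d i i with hv0
  set ψ : Fin d × Fin d → ℂ := ((Real.sqrt S : ℝ) : ℂ)⁻¹ • v₀ with hψ
  have hAψ : A *ᵥ ψ = ((S / d : ℝ) : ℂ) • ψ := part3 hd hx0 hx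
  have hψne : ψ ≠ 0 := by
    intro h0
    have h1 : ψ (0, 0) = 0 := by rw [h0]; rfl
    rw [hψ, Pi.smul_apply, smul_eq_mul, hv0, v0_apply hx0] at h1
    simp only [hx0] at h1
    rcases mul_eq_zero.1 h1 with h | h
    · have : Real.sqrt S ≠ 0 := ne_of_gt (Real.sqrt_pos.2 hSpos)
      simp only [inv_eq_zero, Complex.ofReal_eq_zero] at h
      exact this h
    · norm_num at h
  set b := hH.eigenvectorBasis with hb
  set c : Fin d × Fin d → ℂ := fun p => star (⇑(b p)) ⬝ᵥ ψ with hc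
  have hkey : ∀ p, ((hH.eigenvalues p : ℝ) : ℂ) * c p = ((S / d : ℝ) : ℂ) * c p := by
    intro p
    have h1 : star (⇑(b p)) ⬝ᵥ (A *ᵥ ψ) = ((S / d : ℝ) : ℂ) * c p := by
      rw [hAψ, dotProduct_smul, smul_eq_mul]
    have h2 : star (⇑(b p)) ⬝ᵥ (A *ᵥ ψ) = ((hH.eigenvalues p : ℝ) : ℂ) * c p := by
      rw [Matrix.dotProduct_mulVec]
      have h3 : star (⇑(b p)) ᵥ* A = (hH.eigenvalues p : ℝ) • star (⇑(b p)) := by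
        have h4 := congrArg star (hH.mulVec_eigenvectorBasis p)
        rw [Matrix.star_mulVec, hH] at h4
        rw [← hb] at h4
        rw [h4, star_smul, star_trivial]
      rw [h3, smul_dotProduct, Complex.real_smul]
    rw [← h1, h2]
  have hcex : ∃ p, c p ≠ 0 := by
    by_contra hcon
    push_neg at hcon
    apply hψne
    have hrepr : b.repr ((WithLp.equiv 2 _).symm ψ) = 0 := by
      ext p
      rw [OrthonormalBasis.repr_apply_apply]
      rw [EuclideanSpace.inner_eq_star_dotProduct, dotProduct_comm]
      exact hcon p
    have h5 : (WithLp.equiv 2 _).symm ψ = 0 := b.repr.injective (by rw [hrepr, map_zero])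
    have h6 := congrArg (WithLp.equiv 2 _) h5
    simpa using h6
  obtain ⟨p, hp⟩ := hcex
  refine ⟨p, ?_⟩
  have := mul_right_cancel₀ hp (hkey p)
  exact_mod_cast this

end AuxProof

/-- the state `ρ_{Φ⁺,Ω̂}` produced by the dual map `Ω̂` (Kraus operators `{Aₘ†}`)
equals `|φ₀⟩⟨φ₀| + (1/d) Σ_{m≠0} (1-xₘ²)|0m⟩⟨0m|` with
`|φ₀⟩ = (1/√d)(|00⟩ + Σ_{i≠0} xᵢ|ii⟩)`; its largest eigenvalue is `(1 + Σ_{i≠0} xᵢ²)/d`,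
and `|ψ'⟩ = (|00⟩ + Σ_{i≠0} xᵢ|ii⟩)/√(1 + Σ_{i≠0} xᵢ²)` is an eigenvector for it. -/
theorem dual_output_state (d : ℕ) [NeZero d] (hd : 3 ≤ d) (x : Fin d → ℝ)
    (hx0 : x 0 = 1) (hx : ∀ i : Fin d, i ≠ 0 → 0 < x i ∧ x i < 1)
    (hH : (outChannel d (fun m => (krausA d x m)ᴴ) (phiPlus d)).IsHermitian) :
    outChannel d (fun m => (krausA d x m)ᴴ) (phiPlus d)
      = Matrix.vecMulVec
          (((Real.sqrt d : ℝ) : ℂ)⁻¹ •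
            (stdVec d 0 0 + ∑ i ∈ Finset.univ.erase (0 : Fin d), (x i : ℂ) • stdVec d i i))
          (star (((Real.sqrt d : ℝ) : ℂ)⁻¹ •
            (stdVec d 0 0 + ∑ i ∈ Finset.univ.erase (0 : Fin d), (x i : ℂ) • stdVec d i i)))
        + ∑ m ∈ Finset.univ.erase (0 : Fin d),
            (((1 - (x m) ^ 2) / d : ℝ) : ℂ) •
              Matrix.vecMulVec (stdVec d 0 m) (star (stdVec d 0 m))
    ∧ (⨆ p : Fin d × Fin d, hH.eigenvalues p)
        = (1 + ∑ i ∈ Finset.univ.erase (0 : Fin d), (x i) ^ 2) / d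
    ∧ (outChannel d (fun m => (krausA d x m)ᴴ) (phiPlus d)).mulVec
          (((Real.sqrt (1 + ∑ i ∈ Finset.univ.erase (0 : Fin d), (x i) ^ 2) : ℝ) : ℂ)⁻¹ •
            (stdVec d 0 0 + ∑ i ∈ Finset.univ.erase (0 : Fin d), (x i : ℂ) • stdVec d i i))
        = (((1 + ∑ i ∈ Finset.univ.erase (0 : Fin d), (x i) ^ 2) / d : ℝ) : ℂ) •
            (((Real.sqrt (1 + ∑ i ∈ Finset.univ.erase (0 : Fin d), (x i) ^ 2) : ℝ) : ℂ)⁻¹ •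
              (stdVec d 0 0 + ∑ i ∈ Finset.univ.erase (0 : Fin d), (x i : ℂ) • stdVec d i i)) := by
  have hd0 : 0 < d := by omega
  haveI : Nonempty (Fin d × Fin d) := ⟨(0, 0)⟩
  refine ⟨part1 hd0 hx0 hx, ?_, part3 hd0 hx0 hx⟩
  apply le_antisymm
  · exact ciSup_le (eig_le hd0 hx0 hx hH)
  · obtain ⟨p, hp⟩ := eig_exists hd0 hx0 hx hH
    rw [← hp]
    exact le_ciSup (Finite.bddAbove_range _) p
end
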